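/- For an odd prime p and integers a, b with p ∤ ab, the sum ∑_{l=1}^{p} ((l^2-4l)/p) · K(a, lb) has absolute value at most p^{3/2}. -/

import Mathlib

open Finset

/-- `ep p α = exp(2πiα/p)`. -/
noncomputable def ep (p : ℕ) (α : ℤ) : ℂ := Complex.exp (2 * Real.pi * Complex.I * α / p)

lemma ep_add (p : ℕ) (α β : ℤ) : ep p (α + β) = ep p α * ep p β := by
  unfold ep; rw [← Complex.exp_add]; congr 1; push_cast; ring

lemma ep_zero (p : ℕ) : ep p 0 = 1 := by simp [ep]

lemma ep_pow (p : ℕ) (m : ℤ) (l : ℕ) : ep p ((l : ℤ) * m) = (ep p m) ^ l := by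
  unfold ep
  rw [← Complex.exp_nat_mul]
  congr 1
  push_cast
  ring

lemma ep_conj (p : ℕ) (α : ℤ) : (starRingEnd ℂ) (ep p α) = ep p (-α) := by
  unfold ep
  rw [← Complex.exp_conj]
  congr 1
  simp [map_div₀, Complex.conj_I, map_ofNat]

lemma ep_dvd (p : ℕ) {m : ℤ} (h : (p : ℤ) ∣ m) (hp : p ≠ 0) : ep p m = 1 := by
  obtain ⟨k, rfl⟩ := h
  unfold ep
  have hpc : (p : ℂ) ≠ 0 := Nat.cast_ne_zero.mpr hp
  rw [show (2 * Real.pi * Complex.I * ((p : ℤ) * k : ℤ) / p : ℂ) = (k : ℂ) * (2 * Real.pi * Complex.I) by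
    push_cast; field_simp]
  exact Complex.exp_int_mul_two_pi_mul_I k

lemma ep_ne_one (p : ℕ) {m : ℤ} (h : ¬ (p : ℤ) ∣ m) (hp : p ≠ 0) : ep p m ≠ 1 := by
  intro h1
  unfold ep at h1
  rw [Complex.exp_eq_one_iff] at h1
  obtain ⟨n, hn⟩ := h1
  have hpc : (p : ℂ) ≠ 0 := Nat.cast_ne_zero.mpr hp
  have h2 : (2 : ℂ) * Real.pi * Complex.I ≠ 0 := by
    simp [Real.pi_ne_zero, Complex.I_ne_zero]
  have : (m : ℂ) = n * p := by
    field_simp at hn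
    linear_combination hn
  have : m = n * p := by exact_mod_cast this
  exact h ⟨n, by rw [this]; ring⟩

lemma sum_ep (p : ℕ) (hp : p ≠ 0) (m : ℤ) :
    ∑ l ∈ Icc 1 p, ep p ((l : ℤ) * m) = if (p : ℤ) ∣ m then (p : ℂ) else 0 := by
  have hcong : ∀ l ∈ Icc 1 p, ep p ((l : ℤ) * m) = (ep p m) ^ l := fun l _ => ep_pow p m l
  rw [Finset.sum_congr rfl hcong]
  split_ifs with h
  · have h1 : ep p m = 1 := ep_dvd p h hp
    simp [h1, Nat.card_Icc]
  · have h1 : ep p m ≠ 1 := ep_ne_one p h hp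
    have h2 : (ep p m) ^ p = 1 := by
      rw [← ep_pow]
      exact ep_dvd p ⟨m, rfl⟩ hp
    rw [← Finset.Ico_add_one_right_eq_Icc, geom_sum_Ico h1 (by omega)]
    rw [pow_succ, h2, pow_one]
    simp

/-- The Kloosterman sum `K(a,b) = ∑_{x=1}^{p-1} e_p(a x + b x̄)`. -/
noncomputable def Kl (p : ℕ) (a b : ℤ) : ℂ :=
  ∑ x ∈ Finset.Icc 1 (p - 1), ep p (a * x + b * (((x : ZMod p)⁻¹).val : ℤ))

lemma dvd_iff_eq (p : ℕ) [Fact p.Prime] {b : ℤ} (hb : ¬ (p : ℤ) ∣ b) {x y : ℕ}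
    (hx : x ∈ Icc 1 (p - 1)) (hy : y ∈ Icc 1 (p - 1)) :
    (p : ℤ) ∣ b * ((((x : ZMod p)⁻¹).val : ℤ) - (((y : ZMod p)⁻¹).val : ℤ)) ↔ x = y := by
  have hp : p.Prime := Fact.out
  constructor
  · intro h
    have hpp : Prime (p : ℤ) := Nat.prime_iff_prime_int.mp hp
    rcases hpp.dvd_mul.mp h with h' | h'
    · exact absurd h' hb
    · have h1 : ((x : ZMod p)⁻¹).val < p := ZMod.val_lt _
      have h2 : ((y : ZMod p)⁻¹).val < p := ZMod.val_lt _
      have h0 : ((((x : ZMod p)⁻¹).val : ℤ) - (((y : ZMod p)⁻¹).val : ℤ)) = 0 := by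
        apply Int.eq_zero_of_abs_lt_dvd h'
        rw [abs_sub_lt_iff]
        constructor <;> push_cast <;> omega
      have h3 : ((x : ZMod p)⁻¹).val = ((y : ZMod p)⁻¹).val := by omega
      have h4 : (x : ZMod p)⁻¹ = (y : ZMod p)⁻¹ := ZMod.val_injective p h3
      have h5 : (x : ZMod p) = (y : ZMod p) := by
        have := congrArg (·⁻¹) h4
        simpa using this
      have hxlt : x < p := by have := mem_Icc.mp hx; have := hp.two_le; omega
      have hylt : y < p := by have := mem_Icc.mp hy; have := hp.two_le; omega
      have h6 := congrArg ZMod.val h5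
      rwa [ZMod.val_cast_of_lt hxlt, ZMod.val_cast_of_lt hylt] at h6
  · rintro rfl; simp

lemma sum_Kl_normSq (p : ℕ) [Fact p.Prime] (a b : ℤ) (hb : ¬ (p : ℤ) ∣ b) :
    ∑ l ∈ Icc 1 p, Kl p a ((l : ℤ) * b) * (starRingEnd ℂ) (Kl p a ((l : ℤ) * b))
      = ((p - 1 : ℕ) : ℂ) * p := by
  have hp : p.Prime := Fact.out
  have hp0 : p ≠ 0 := hp.ne_zero
  have expand : ∀ l : ℕ, Kl p a ((l : ℤ) * b) * (starRingEnd ℂ) (Kl p a ((l : ℤ) * b))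
      = ∑ x ∈ Icc 1 (p - 1), ∑ y ∈ Icc 1 (p - 1),
          ep p ((a * x - a * y)
            + (l : ℤ) * (b * ((((x : ZMod p)⁻¹).val : ℤ) - (((y : ZMod p)⁻¹).val : ℤ)))) := by
    intro l
    unfold Kl
    rw [map_sum, Finset.sum_mul_sum]
    refine Finset.sum_congr rfl fun x hx => Finset.sum_congr rfl fun y hy => ?_
    rw [ep_conj, ← ep_add]
    congr 1
    ring
  rw [Finset.sum_congr rfl fun l _ => expand l, Finset.sum_comm]
  rw [Finset.sum_congr rfl fun x (_ : x ∈ Icc 1 (p - 1)) => Finset.sum_comm]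
  have inner : ∀ x ∈ Icc 1 (p - 1), ∀ y ∈ Icc 1 (p - 1),
      ∑ l ∈ Icc 1 p, ep p ((a * x - a * y)
          + (l : ℤ) * (b * ((((x : ZMod p)⁻¹).val : ℤ) - (((y : ZMod p)⁻¹).val : ℤ))))
        = ep p (a * x - a * y) * (if x = y then (p : ℂ) else 0) := by
    intro x hx y hy
    rw [Finset.sum_congr rfl fun l (_ : l ∈ Icc 1 p) => ep_add p (a * x - a * y) _,
      ← Finset.mul_sum, sum_ep p hp0, if_congr (dvd_iff_eq p hb hx hy) rfl rfl]
  rw [Finset.sum_congr rfl fun x hx => Finset.sum_congr rfl fun y hy => inner x hx y hy]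
  have diag : ∀ x ∈ Icc 1 (p - 1),
      ∑ y ∈ Icc 1 (p - 1), ep p (a * x - a * y) * (if x = y then (p : ℂ) else 0) = p := by
    intro x hx
    rw [Finset.sum_eq_single x]
    · simp [sub_self, ep_zero]
    · intro y _ hyx
      simp [Ne.symm hyx]
    · intro h; exact absurd hx h
  rw [Finset.sum_congr rfl diag, Finset.sum_const, Nat.card_Icc]
  simp [nsmul_eq_mul]

lemma leg_abs (p : ℕ) [Fact p.Prime] (n : ℤ) : |((legendreSym p n : ℤ) : ℝ)| ≤ 1 := by
  rcases eq_or_ne ((n : ZMod p)) 0 with h | h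
  · rw [(legendreSym.eq_zero_iff p n).mpr h]; norm_num
  · rcases legendreSym.eq_one_or_neg_one p h with h' | h' <;> rw [h'] <;> norm_num

theorem stmt7 (p : ℕ) [Fact p.Prime] (hp2 : p ≠ 2) (a b : ℤ)
    (ha : ¬ (p : ℤ) ∣ a) (hb : ¬ (p : ℤ) ∣ b) :
    ‖∑ l ∈ Finset.Icc 1 p,
        ((legendreSym p ((l : ℤ) ^ 2 - 4 * l) : ℤ) : ℂ) * Kl p a (l * b)‖
      ≤ (p : ℝ) ^ ((3 : ℝ) / 2) := by
  have hp : p.Prime := Fact.out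
  have hp0 : (0 : ℝ) < p := by exact_mod_cast hp.pos
  set f : ℕ → ℝ := fun l => |((legendreSym p ((l : ℤ) ^ 2 - 4 * l) : ℤ) : ℝ)| with hf
  set g : ℕ → ℝ := fun l => ‖Kl p a (l * b)‖ with hg
  have habs : ‖∑ l ∈ Finset.Icc 1 p,
      ((legendreSym p ((l : ℤ) ^ 2 - 4 * l) : ℤ) : ℂ) * Kl p a (l * b)‖
      ≤ ∑ l ∈ Finset.Icc 1 p, f l * g l := by
    refine le_trans (norm_sum_le _ _) (le_of_eq (Finset.sum_congr rfl fun l _ => ?_))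
    rw [norm_mul, hf, hg]
    simp [Complex.norm_intCast]
  have hgsq : ∑ l ∈ Finset.Icc 1 p, g l ^ 2 = ((p - 1 : ℕ) : ℝ) * p := by
    have key := sum_Kl_normSq p a b hb
    have : ((∑ l ∈ Finset.Icc 1 p, g l ^ 2 : ℝ) : ℂ) = (((p - 1 : ℕ) : ℝ) * p : ℝ) := by
      push_cast
      rw [← key]
      refine Finset.sum_congr rfl fun l _ => ?_
      rw [hg, Complex.mul_conj]
      norm_cast
      exact Complex.sq_norm _
    exact_mod_cast this
  have hfsq : ∑ l ∈ Finset.Icc 1 p, f l ^ 2 ≤ (p : ℝ) := by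
    calc ∑ l ∈ Finset.Icc 1 p, f l ^ 2 ≤ ∑ l ∈ Finset.Icc 1 p, 1 := by
          refine Finset.sum_le_sum fun l _ => ?_
          have := leg_abs p ((l : ℤ) ^ 2 - 4 * l)
          have h0 : (0:ℝ) ≤ f l := abs_nonneg _
          nlinarith
      _ = ((p : ℝ)) := by simp [Nat.card_Icc]
  have hCS := Finset.sum_mul_sq_le_sq_mul_sq (Finset.Icc 1 p) f g
  have hA2 : (∑ l ∈ Finset.Icc 1 p, f l * g l) ^ 2 ≤ (p : ℝ) ^ 3 := by
    have hgnn : (0:ℝ) ≤ ((p - 1 : ℕ) : ℝ) * p := by positivity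
    have h1 : (∑ l ∈ Finset.Icc 1 p, f l ^ 2) * (∑ l ∈ Finset.Icc 1 p, g l ^ 2)
        ≤ (p : ℝ) * (((p - 1 : ℕ) : ℝ) * p) := by
      rw [hgsq]
      exact mul_le_mul_of_nonneg_right hfsq hgnn
    have h2 : (p : ℝ) * (((p - 1 : ℕ) : ℝ) * p) ≤ (p : ℝ) ^ 3 := by
      have hle : ((p - 1 : ℕ) : ℝ) ≤ (p : ℝ) := by exact_mod_cast Nat.sub_le p 1
      have h3 := mul_le_mul_of_nonneg_right hle (le_of_lt hp0)
      nlinarith [h3, hp0]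
    linarith
  have hsq : ((p : ℝ) ^ ((3 : ℝ) / 2)) ^ 2 = (p : ℝ) ^ 3 := by
    rw [← Real.rpow_natCast ((p : ℝ) ^ ((3 : ℝ) / 2)) 2, ← Real.rpow_mul (le_of_lt hp0)]
    norm_num
  have hsum_nn : (0:ℝ) ≤ ∑ l ∈ Finset.Icc 1 p, f l * g l :=
    Finset.sum_nonneg fun l _ => mul_nonneg (abs_nonneg _) (norm_nonneg _)
  have hfin : ‖∑ l ∈ Finset.Icc 1 p,
      ((legendreSym p ((l : ℤ) ^ 2 - 4 * l) : ℤ) : ℂ) * Kl p a (l * b)‖ ^ 2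
      ≤ ((p : ℝ) ^ ((3 : ℝ) / 2)) ^ 2 := by
    rw [hsq]
    calc _ ≤ (∑ l ∈ Finset.Icc 1 p, f l * g l) ^ 2 := by
          apply pow_le_pow_left₀ (norm_nonneg _) habs
      _ ≤ (p : ℝ) ^ 3 := hA2
  have hrnn : (0:ℝ) ≤ (p : ℝ) ^ ((3 : ℝ) / 2) := Real.rpow_nonneg (le_of_lt hp0) _
  nlinarith [norm_nonneg (∑ l ∈ Finset.Icc 1 p,
      ((legendreSym p ((l : ℤ) ^ 2 - 4 * l) : ℤ) : ℂ) * Kl p a (l * b))]
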